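/- Lemma 2.3(i), complex case: for every z ∈ ℂ with x := Re z > 0 and |Im z| ≤ x (i.e. |arg z| ≤ π/4), one has Re ξ(z) ≥ ξ(x). -/

import Mathlib

set_option maxHeartbeats 1000000

noncomputable section


lemma xi_key (x y u v U : ℝ) (hx : 0 < x) (hy2 : y^2 ≤ x^2) (hu : 0 < u)
    (hU : U^2 = 1 + x^2) (hU1 : 1 ≤ U)
    (h1 : u^2 - v^2 = 1 + x^2 - y^2) (h2 : u*v = x*y) :
    x^2*((1+u)^2+v^2) ≤ (1+2*u-2*U)*(1+U)^2*(x^2+y^2) := by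
  have hI1 : (u^2 - x^2)*(v^2 + x^2) = x^2 := by
    linear_combination (x*y + u*v)*h2 + x^2*h1
  have hx2 : x^2 < u^2 := by nlinarith [hI1, sq_nonneg v, mul_pos hx hx]
  have hux : x < u := by nlinarith [hx2, hu, hx]
  have hd1 : u^2 - x^2 ≤ 1 := by nlinarith [hI1, sq_nonneg v, mul_pos hx hx]
  have hu1 : 1 ≤ u := by nlinarith [h1, hy2, sq_nonneg v]
  have huU : u ≤ U := by nlinarith [hd1, hU]
  have hI2 : u^2*(v^2+x^2)*(y^2-v^2) = x^2*y^2 := by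
    linear_combination (u^2*v^2)*h1 + (x*y + u*v - u^2*x*y - u^3*v)*h2
  have hpos : 0 < u^2*(v^2+x^2) := by positivity
  have hvy : v^2 ≤ y^2 := by nlinarith [hI2, hpos, sq_nonneg (x*y)]
  -- the core inequality, via d := u^2 - x^2 ∈ (0,1]
  have hud : (0:ℝ) ≤ u - (u^2-x^2) := by nlinarith
  have h1d : (0:ℝ) ≤ 1 - (u^2-x^2) := by nlinarith
  have hUd : (0:ℝ) ≤ U - (u^2-x^2) := by nlinarith
  have hW : 2*x^2*(U+x^2)*(u^2-x^2) ≤ (u+(u^2-x^2))*(u+U)*u^2 := by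
    nlinarith [mul_nonneg (mul_nonneg (sq_nonneg u) (sub_nonneg.2 huU)) hud,
      mul_nonneg (mul_nonneg (sq_nonneg u) (sq_nonneg u)) h1d,
      sq_nonneg (u*(u^2-x^2)),
      mul_nonneg (sq_nonneg (u^2-x^2)) hUd]
  have hBB : u + (u^2-x^2) ≤ U*u-U+2*u-x^2 := by
    nlinarith [mul_nonneg (sub_nonneg.2 hu1) (sub_nonneg.2 huU)]
  have hUx2 : (0:ℝ) ≤ U + x^2 := by positivity
  have hCC : (x^2+y^2)*(U+x^2)+x^2-x^2*u ≤ 2*x^2*(U+x^2) := by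
    nlinarith [mul_nonneg (sub_nonneg.2 hy2) hUx2,
      mul_nonneg (le_of_lt (mul_pos hx hx)) (sub_nonneg.2 hu1)]
  have hcore : 0 ≤ (U*u-U+2*u-x^2)*(u+U)*u^2 - ((x^2+y^2)*(U+x^2)+x^2-x^2*u)*(u^2-x^2) := by
    have s1 : ((x^2+y^2)*(U+x^2)+x^2-x^2*u)*(u^2-x^2) ≤ 2*x^2*(U+x^2)*(u^2-x^2) :=
      mul_le_mul_of_nonneg_right hCC (by nlinarith)
    have s2 : (u+(u^2-x^2))*(u+U)*u^2 ≤ (U*u-U+2*u-x^2)*(u+U)*u^2 := by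
      have hq : 0 ≤ (u+U)*u^2 := by positivity
      calc (u+(u^2-x^2))*(u+U)*u^2 = (u+(u^2-x^2))*((u+U)*u^2) := by ring
        _ ≤ (U*u-U+2*u-x^2)*((u+U)*u^2) := mul_le_mul_of_nonneg_right hBB hq
        _ = (U*u-U+2*u-x^2)*(u+U)*u^2 := by ring
    linarith [hW]
  have hID : u^2*x^2*(u+U)*((1+2*u-2*U)*(1+U)^2*(x^2+y^2) - x^2*((1+u)^2+v^2))
      = 2*x^2*y^2*((U*u-U+2*u-x^2)*(u+U)*u^2 - ((x^2+y^2)*(U+x^2)+x^2-x^2*u)*(u^2-x^2)) := by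
    linear_combination ((2)*u^2*x^4 + (2)*u^2*x^4*y^2 + (2)*u^2*x^6 + (2)*u^2*U*x^2*y^2 + (3)*u^2*U*x^4 + (-1)*u^3*x^4)*h1 + ((2)*x^5*y + (2)*x^5*y^3 + (2)*x^7*y + (2)*U*x^3*y^3 + (2)*U*x^5*y + (-2)*u*x^5*y + (2)*u*v*x^4 + (2)*u*v*x^4*y^2 + (2)*u*v*x^6 + (2)*u*v*U*x^2*y^2 + (2)*u*v*U*x^4 + (-2)*u^2*v*x^4)*h2 + ((-2)*u^2*x^4 + (-2)*u^2*x^4*y^2 + (-2)*u^2*x^6 + (-3)*u^2*U*x^2*y^2 + (-3)*u^2*U*x^4 + (-2)*u^2*U^2*x^2*y^2 + (-2)*u^2*U^2*x^4 + (-1)*u^3*x^2*y^2 + u^3*x^4 + (2)*u^4*x^2*y^2 + (2)*u^4*x^4)*hU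
  have hM : 0 < u^2*x^2*(u+U) := by positivity
  nlinarith [hID, hM, mul_nonneg (mul_nonneg (mul_nonneg (by norm_num : (0:ℝ) ≤ 2) (sq_nonneg x)) (sq_nonneg y)) hcore]


/-- `ξ(z) = (1+z²)^{1/2} + Log(z/(1+(1+z²)^{1/2}))` with principal branches. -/
def xi (z : ℂ) : ℂ :=
  (1 + z ^ 2) ^ ((1 : ℂ) / 2) + Complex.log (z / (1 + (1 + z ^ 2) ^ ((1 : ℂ) / 2)))

/-- Lemma 2.3(i), complex case: for every `z ∈ ℂ` with `x := Re z > 0` and `|Im z| ≤ x`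
(i.e. `|arg z| ≤ π/4`), one has `Re ξ(z) ≥ ξ(x)`. -/
theorem xi_re_ge_xi_of_re (z : ℂ) (hre : 0 < z.re) (him : |z.im| ≤ z.re) :
    Real.sqrt (1 + z.re ^ 2) + Real.log (z.re / (1 + Real.sqrt (1 + z.re ^ 2))) ≤ (xi z).re := by
  have hy2 : z.im^2 ≤ z.re^2 := by
    have h := abs_le.1 him
    nlinarith [h.1, h.2]
  have hz0 : z ≠ 0 := by
    intro h; rw [h] at hre; simp at hre
  set x := z.re with hxdef
  set y := z.im with hydef
  set c : ℂ := 1 + z^2 with hcdef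
  have hcre : c.re = 1 + x*x - y*y := by
    simp only [hcdef, pow_two, Complex.add_re, Complex.mul_re, Complex.one_re]
    rw [hxdef, hydef]; ring
  have hcim : c.im = x*y + y*x := by
    simp only [hcdef, pow_two, Complex.add_im, Complex.mul_im, Complex.one_im]
    rw [hxdef, hydef]; ring
  have hcre_pos : 0 < c.re := by rw [hcre]; nlinarith
  have hc0 : c ≠ 0 := by
    intro h; rw [h] at hcre_pos; simp at hcre_pos
  set w : ℂ := c ^ ((1:ℂ)/2) with hwdef
  have hw2 : w^2 = c := by
    rw [hwdef, pow_two, ← Complex.cpow_add _ _ hc0]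
    norm_num
  -- Re w > 0
  have hargc : |c.arg| < Real.pi/2 := Complex.abs_arg_lt_pi_div_two_iff.2 (Or.inl hcre_pos)
  have hwre : 0 < w.re := by
    rw [hwdef, Complex.cpow_def_of_ne_zero hc0, Complex.exp_re]
    apply mul_pos (Real.exp_pos _)
    apply Real.cos_pos_of_mem_Ioo
    have him' : (Complex.log c * (1/2)).im = c.arg / 2 := by
      simp [Complex.mul_im, Complex.log_im]
      ring
    rw [him']
    constructor
    · have := abs_lt.1 hargc
      linarith [this.1, Real.pi_pos]
    · have := abs_lt.1 hargc
      linarith [this.2, Real.pi_pos]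
  set u := w.re with hudef
  set v := w.im with hvdef
  have h1 : u^2 - v^2 = 1 + x^2 - y^2 := by
    have := congrArg Complex.re hw2
    rw [pow_two, Complex.mul_re, hcre] at this
    nlinarith [this]
  have h2 : u*v = x*y := by
    have := congrArg Complex.im hw2
    rw [pow_two, Complex.mul_im, hcim] at this
    nlinarith [this]
  set U := Real.sqrt (1 + x^2) with hUdef
  have hU : U^2 = 1 + x^2 := Real.sq_sqrt (by positivity)
  have hU1 : 1 ≤ U := by
    nlinarith [hU, Real.sqrt_nonneg (1 + x^2), sq_nonneg x]
  have key := xi_key x y u v U hre hy2 hwre hU hU1 h1 h2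
  have hw1 : (1:ℂ) + w ≠ 0 := by
    intro h
    have : ((1:ℂ) + w).re = 0 := by rw [h]; simp
    rw [Complex.add_re, Complex.one_re] at this
    linarith
  have hA : 0 < ‖z‖ := norm_pos_iff.mpr hz0
  have hB : 0 < ‖1 + w‖ := norm_pos_iff.mpr hw1
  have hxire : (xi z).re = u + (Real.log (‖z‖) - Real.log (‖1+w‖)) := by
    rw [xi]
    rw [Complex.add_re, Complex.log_re, norm_div, Real.log_div (ne_of_gt hA) (ne_of_gt hB)]
  have habsz : (‖z‖)^2 = x^2 + y^2 := by
    rw [Complex.sq_norm, Complex.normSq_apply]; ring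
  have habsw : (‖1+w‖)^2 = (1+u)^2 + v^2 := by
    rw [Complex.sq_norm, Complex.normSq_apply, Complex.add_re, Complex.add_im,
      Complex.one_re, Complex.one_im]
    ring
  -- the ratio
  set r : ℝ := (x * ‖1+w‖) / ((1+U) * ‖z‖) with hrdef
  have h1U : (0:ℝ) < 1 + U := by linarith
  have hr : 0 < r := by
    apply div_pos (mul_pos hre hB) (mul_pos h1U hA)
  have hr2 : r^2 ≤ 1 + 2*(u - U) := by
    have hden : (0:ℝ) < ((1+U) * ‖z‖)^2 := by positivity
    rw [hrdef, div_pow, div_le_iff₀ hden, mul_pow, mul_pow, habsz, habsw]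
    nlinarith [key]
  have hlogr : Real.log r ≤ u - U := by
    have hl2 : Real.log (r^2) ≤ r^2 - 1 := Real.log_le_sub_one_of_pos (by positivity)
    rw [Real.log_pow] at hl2
    push_cast at hl2
    nlinarith [hl2, hr2]
  have hsplit : Real.log r = Real.log x + Real.log (‖1+w‖)
      - (Real.log (1+U) + Real.log (‖z‖)) := by
    rw [hrdef, Real.log_div (by positivity) (by positivity),
      Real.log_mul (ne_of_gt hre) (ne_of_gt hB),
      Real.log_mul (ne_of_gt h1U) (ne_of_gt hA)]
  have hlhs : Real.log (x / (1 + U)) = Real.log x - Real.log (1+U) :=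
    Real.log_div (ne_of_gt hre) (ne_of_gt h1U)
  rw [hxire, hlhs]
  linarith [hlogr, hsplit]

end
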